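/- Define the degree of a power sum monomial p_ν to be ℓ(ν). For any weak composition (n_1,…,n_j) of positive integers, the lowest-degree part of the product h_{n_1} h_{n_2} ⋯ h_{n_j}, when expanded in the power sum basis, equals (p_{n_1}/n_1)(p_{n_2}/n_2)⋯(p_{n_j}/n_j). -/

import Mathlib

open scoped Classical

/-- The power sum symmetric function `p_m = Σ_j x_j^m`. -/
noncomputable def powerSum (m : ℕ) : MvPowerSeries ℕ ℚ :=
  fun d => if ∃ j : ℕ, d = Finsupp.single j m then 1 else 0

/-- The complete homogeneous symmetric function `h_n`. -/
noncomputable def completeHomogeneous (n : ℕ) : MvPowerSeries ℕ ℚ :=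
  fun d => if (d.sum fun _ e => e) = n then 1 else 0

/-- `p_ν = p_{ν₁} p_{ν₂} ⋯` for a partition `ν`. -/
noncomputable def powerSumProd {n : ℕ} (nu : Nat.Partition n) : MvPowerSeries ℕ ℚ :=
  (nu.parts.map powerSum).prod


/-! ### weight of an exponent -/

def wt (d : ℕ →₀ ℕ) : ℕ := d.sum fun _ e => e

lemma wt_add (a b : ℕ →₀ ℕ) : wt (a + b) = wt a + wt b := by
  simpa [wt] using Finsupp.sum_add_index' (by simp) (by simp) (f := a) (g := b)
    (h := fun (_ : ℕ) (e : ℕ) => e)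

lemma wt_single (j m : ℕ) : wt (Finsupp.single j m) = m := by
  simp [wt, Finsupp.sum_single_index]

lemma le_wt {d : ℕ →₀ ℕ} (j : ℕ) : d j ≤ wt d := by
  by_cases h : d j = 0
  · simp [h]
  · exact Finset.single_le_sum (fun i _ => Nat.zero_le _) (Finsupp.mem_support_iff.2 h)

lemma wt_eq_zero {d : ℕ →₀ ℕ} : wt d = 0 ↔ d = 0 := by
  constructor
  · intro h
    ext a
    have := le_wt (d := d) a
    simp only [Finsupp.coe_zero, Pi.zero_apply]
    omega
  · intro h; simp [h, wt]

/-! ### coefficient computations -/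

lemma coeff_PH (k m : ℕ) (hk : 0 < k) (d : ℕ →₀ ℕ) :
    MvPowerSeries.coeff d (powerSum k * completeHomogeneous m)
      = if wt d = k + m then ((d.support.filter fun j => k ≤ d j).card : ℚ) else 0 := by
  rw [MvPowerSeries.coeff_mul]
  have step : ∀ p ∈ Finset.HasAntidiagonal.antidiagonal d,
      MvPowerSeries.coeff p.1 (powerSum k) * MvPowerSeries.coeff p.2 (completeHomogeneous m)
        = if (∃ j, p.1 = Finsupp.single j k) ∧ wt p.2 = m then (1 : ℚ) else 0 := by
    intro p _
    rw [MvPowerSeries.coeff_apply, MvPowerSeries.coeff_apply]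
    simp only [powerSum, completeHomogeneous, wt]
    split_ifs with h1 h2 h3 h4 h5 <;> simp_all
  rw [Finset.sum_congr rfl step, Finset.sum_boole]
  have hcard : ((Finset.HasAntidiagonal.antidiagonal d).filter
      fun p => (∃ j, p.1 = Finsupp.single j k) ∧ wt p.2 = m).card
      = if wt d = k + m then (d.support.filter fun j => k ≤ d j).card else 0 := by
    split_ifs with hw
    · rw [← Finset.card_image_of_injOn (f := fun j => ((Finsupp.single j k : ℕ →₀ ℕ),
          d - Finsupp.single j k)) ?inj]
      · congr 1
        ext p
        simp only [Finset.mem_filter, Finset.HasAntidiagonal.mem_antidiagonal, Finset.mem_image,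
          Finsupp.mem_support_iff]
        constructor
        · rintro ⟨hpd, ⟨j, hj⟩, hm⟩
          have hdj : d j = k + p.2 j := by rw [← hpd, hj]; simp
          refine ⟨j, ⟨by omega, by omega⟩, ?_⟩
          have h2 : p.2 = d - p.1 := eq_tsub_of_add_eq (by rw [add_comm]; exact hpd)
          have : p = (p.1, p.2) := rfl
          rw [this, h2, hj]
        · rintro ⟨j, ⟨hj0, hjk⟩, rfl⟩
          have hle : (Finsupp.single j k : ℕ →₀ ℕ) ≤ d := Finsupp.single_le_iff.2 hjk
          have hadd : (Finsupp.single j k : ℕ →₀ ℕ) + (d - Finsupp.single j k) = d :=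
            add_tsub_cancel_of_le hle
          refine ⟨hadd, ⟨j, rfl⟩, ?_⟩
          show wt (d - Finsupp.single j k) = m
          have := wt_add (Finsupp.single j k) (d - Finsupp.single j k)
          rw [hadd, wt_single] at this
          omega
      case inj =>
        intro j1 _ j2 _ he
        have h1 : (Finsupp.single j1 k : ℕ →₀ ℕ) = Finsupp.single j2 k := congrArg Prod.fst he
        have hk' : (Finsupp.single j1 k : ℕ →₀ ℕ) j1 = k := by simp
        rw [h1, Finsupp.single_apply] at hk'
        by_contra hne
        rw [if_neg (fun h => hne h.symm)] at hk'
        omega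
    · rw [Finset.card_eq_zero, Finset.filter_eq_empty_iff]
      rintro p hp ⟨⟨j, hj⟩, hm⟩
      rw [Finset.HasAntidiagonal.mem_antidiagonal] at hp
      have := wt_add p.1 p.2
      rw [hp, hj, wt_single] at this
      omega
  rw [hcard]
  split_ifs <;> simp

lemma H_zero : completeHomogeneous 0 = 1 := by
  ext d
  rw [MvPowerSeries.coeff_apply, MvPowerSeries.coeff_one]
  simp only [completeHomogeneous]
  by_cases h : d = 0
  · rw [if_pos h, if_pos]; exact wt_eq_zero.2 h
  · rw [if_neg h, if_neg]
    exact fun hw => h (wt_eq_zero.1 hw)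

lemma newton (n : ℕ) :
    (n : ℚ) • completeHomogeneous n
      = ∑ k ∈ Finset.Icc 1 n, powerSum k * completeHomogeneous (n - k) := by
  ext d
  rw [map_smul, map_sum]
  have hterm : ∀ k ∈ Finset.Icc 1 n,
      MvPowerSeries.coeff d (powerSum k * completeHomogeneous (n - k))
        = if wt d = n then ((d.support.filter fun j => k ≤ d j).card : ℚ) else 0 := by
    intro k hk
    rw [Finset.mem_Icc] at hk
    rw [coeff_PH k (n - k) hk.1 d]
    congr 2
    omega
  rw [Finset.sum_congr rfl hterm, MvPowerSeries.coeff_apply]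
  simp only [completeHomogeneous]
  rw [show (d.sum fun _ e => e) = wt d from rfl]
  by_cases hw : wt d = n
  · rw [if_pos hw]
    simp only [hw, if_true]
    have key : ∑ k ∈ Finset.Icc 1 n, (d.support.filter fun j => k ≤ d j).card = n := by
      calc ∑ k ∈ Finset.Icc 1 n, (d.support.filter fun j => k ≤ d j).card
          = ∑ k ∈ Finset.Icc 1 n, ∑ j ∈ d.support, if k ≤ d j then 1 else 0 :=
            Finset.sum_congr rfl fun k _ => Finset.card_filter _ _
        _ = ∑ j ∈ d.support, ∑ k ∈ Finset.Icc 1 n, if k ≤ d j then 1 else 0 :=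
            Finset.sum_comm
        _ = ∑ j ∈ d.support, d j := by
            refine Finset.sum_congr rfl fun j hj => ?_
            have hdj : d j ≤ n := hw ▸ le_wt j
            rw [← Finset.sum_filter]
            have hfe : (Finset.Icc 1 n).filter (fun k => k ≤ d j) = Finset.Icc 1 (d j) := by
              ext k
              simp only [Finset.mem_filter, Finset.mem_Icc]
              omega
            rw [hfe, Finset.sum_const, Nat.card_Icc, smul_eq_mul, mul_one]
            omega
        _ = n := hw
    rw [← Nat.cast_sum, key]
    simp
  · rw [if_neg hw]
    simp [hw]

/-! ### partitions -/

def emptyPart : Nat.Partition 0 := ⟨0, by simp, by simp⟩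

def singlePart (n : ℕ) (hn : 0 < n) : Nat.Partition n :=
  ⟨{n}, by intro i hi; rw [Multiset.mem_singleton] at hi; omega, by simp⟩

def addPart {a b : ℕ} (mu : Nat.Partition a) (nu : Nat.Partition b) : Nat.Partition (a + b) :=
  ⟨mu.parts + nu.parts, by
    intro i hi
    rcases Multiset.mem_add.1 hi with h | h
    · exact mu.parts_pos h
    · exact nu.parts_pos h, by rw [Multiset.sum_add, mu.parts_sum, nu.parts_sum]⟩

lemma pprod_empty : powerSumProd emptyPart = 1 := by
  simp [powerSumProd, emptyPart]

lemma pprod_single (n : ℕ) (hn : 0 < n) : powerSumProd (singlePart n hn) = powerSum n := by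
  simp [powerSumProd, singlePart]

lemma pprod_add {a b : ℕ} (mu : Nat.Partition a) (nu : Nat.Partition b) :
    powerSumProd (addPart mu nu) = powerSumProd mu * powerSumProd nu := by
  simp [powerSumProd, addPart, Multiset.prod_add]

lemma parts_card_pos {n : ℕ} (hn : 0 < n) (nu : Nat.Partition n) :
    1 ≤ Multiset.card nu.parts := by
  by_contra h
  have h0 : nu.parts = 0 := by
    rw [← Multiset.card_eq_zero]; omega
  have hs := nu.parts_sum
  rw [h0] at hs
  simp at hs
  omega

/-! ### span of long power sum products -/

noncomputable def spanGE (N j : ℕ) : Submodule ℚ (MvPowerSeries ℕ ℚ) :=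
  Submodule.span ℚ (Set.range
    (fun nu : {nu : Nat.Partition N // j ≤ Multiset.card nu.parts} => powerSumProd nu.1))

lemma pprod_mem_spanGE {N j : ℕ} (nu : Nat.Partition N) (h : j ≤ Multiset.card nu.parts) :
    powerSumProd nu ∈ spanGE N j :=
  Submodule.subset_span ⟨⟨nu, h⟩, rfl⟩

lemma spanGE_mono {N j j' : ℕ} (h : j ≤ j') : spanGE N j' ≤ spanGE N j := by
  rw [spanGE, Submodule.span_le]
  rintro x ⟨nu, rfl⟩
  exact pprod_mem_spanGE nu.1 (le_trans h nu.2)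

lemma spanGE_mul {a b j₁ j₂ : ℕ} {x y : MvPowerSeries ℕ ℚ}
    (hx : x ∈ spanGE a j₁) (hy : y ∈ spanGE b j₂) : x * y ∈ spanGE (a + b) (j₁ + j₂) := by
  induction hx using Submodule.span_induction with
  | mem x hx =>
    obtain ⟨mu, rfl⟩ := hx
    induction hy using Submodule.span_induction with
    | mem y hy =>
      obtain ⟨nu, rfl⟩ := hy
      rw [← pprod_add]
      refine pprod_mem_spanGE _ ?_
      show j₁ + j₂ ≤ Multiset.card (mu.1.parts + nu.1.parts)
      rw [Multiset.card_add]
      exact Nat.add_le_add mu.2 nu.2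
    | zero => rw [mul_zero]; exact Submodule.zero_mem _
    | add y z _ _ hy hz => rw [mul_add]; exact Submodule.add_mem _ hy hz
    | smul c y _ hy => rw [mul_smul_comm]; exact Submodule.smul_mem _ c hy
  | zero => rw [zero_mul]; exact Submodule.zero_mem _
  | add x z _ _ hx hz => rw [add_mul]; exact Submodule.add_mem _ hx hz
  | smul c x _ hx => rw [smul_mul_assoc]; exact Submodule.smul_mem _ c hx

lemma spanGE_zero_le {n : ℕ} (hn : 0 < n) : spanGE n 0 ≤ spanGE n 1 := by
  rw [spanGE, Submodule.span_le]
  rintro x ⟨nu, rfl⟩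
  exact pprod_mem_spanGE nu.1 (parts_card_pos hn nu.1)

lemma H_mem_spanGE : ∀ n : ℕ, completeHomogeneous n ∈ spanGE n 0 := by
  intro n
  induction n using Nat.strong_induction_on with
  | _ n ih =>
    rcases Nat.eq_zero_or_pos n with rfl | hn
    · rw [H_zero, ← pprod_empty]
      exact pprod_mem_spanGE _ (Nat.zero_le _)
    · have hne : (n : ℚ) ≠ 0 := Nat.cast_ne_zero.2 (by omega)
      have hH : completeHomogeneous n
          = (n : ℚ)⁻¹ • ∑ k ∈ Finset.Icc 1 n, powerSum k * completeHomogeneous (n - k) := by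
        rw [← newton, smul_smul, inv_mul_cancel₀ hne, one_smul]
      rw [hH]
      refine Submodule.smul_mem _ _ (Submodule.sum_mem _ fun k hk => ?_)
      rw [Finset.mem_Icc] at hk
      have hP : powerSum k ∈ spanGE k 1 := by
        rw [← pprod_single k hk.1]
        exact pprod_mem_spanGE _ (by simp [singlePart])
      have hHk : completeHomogeneous (n - k) ∈ spanGE (n - k) 0 := ih _ (by omega)
      have := spanGE_mul hP hHk
      rw [show k + (n - k) = n by omega] at this
      exact spanGE_mono (by omega) this

lemma key_H {n : ℕ} (hn : 0 < n) :
    completeHomogeneous n - (n : ℚ)⁻¹ • powerSum n ∈ spanGE n 2 := by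
  obtain ⟨m, rfl⟩ : ∃ m, n = m + 1 := ⟨n - 1, by omega⟩
  have hne : ((m + 1 : ℕ) : ℚ) ≠ 0 := Nat.cast_ne_zero.2 (by omega)
  have hsplit : ∑ k ∈ Finset.Icc 1 (m + 1), powerSum k * completeHomogeneous (m + 1 - k)
      = (∑ k ∈ Finset.Icc 1 m, powerSum k * completeHomogeneous (m + 1 - k))
        + powerSum (m + 1) := by
    rw [Finset.sum_Icc_succ_top (by omega)]
    simp [H_zero]
  have hH : completeHomogeneous (m + 1)
      = ((m + 1 : ℕ) : ℚ)⁻¹ • ((∑ k ∈ Finset.Icc 1 m,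
          powerSum k * completeHomogeneous (m + 1 - k)) + powerSum (m + 1)) := by
    rw [← hsplit, ← newton, smul_smul, inv_mul_cancel₀ hne, one_smul]
  rw [hH, smul_add, add_sub_cancel_right]
  refine Submodule.smul_mem _ _ (Submodule.sum_mem _ fun k hk => ?_)
  rw [Finset.mem_Icc] at hk
  have hP : powerSum k ∈ spanGE k 1 := by
    rw [← pprod_single k hk.1]
    exact pprod_mem_spanGE _ (by simp [singlePart])
  have hHk : completeHomogeneous (m + 1 - k) ∈ spanGE (m + 1 - k) 1 :=
    spanGE_zero_le (by omega) (H_mem_spanGE _)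
  have := spanGE_mul hP hHk
  rwa [show k + (m + 1 - k) = m + 1 by omega] at this

/-! ### products -/

lemma prodP_mem : ∀ (j : ℕ) (n : Fin j → ℕ), (∀ i, 0 < n i) → ∀ (N : ℕ), (∑ i, n i) = N →
    (∏ i, ((n i : ℚ))⁻¹ • powerSum (n i)) ∈ spanGE N j := by
  intro j
  induction j with
  | zero =>
    intro n _ N hN
    simp only [Finset.univ_eq_empty, Finset.prod_empty]
    simp only [Finset.univ_eq_empty, Finset.sum_empty] at hN
    subst hN
    rw [← pprod_empty]
    exact pprod_mem_spanGE _ (by simp [emptyPart])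
  | succ j ih =>
    intro n hpos N hN
    rw [Fin.prod_univ_succ]
    rw [Fin.sum_univ_succ] at hN
    have h0 : ((n 0 : ℚ))⁻¹ • powerSum (n 0) ∈ spanGE (n 0) 1 := by
      refine Submodule.smul_mem _ _ ?_
      rw [← pprod_single (n 0) (hpos 0)]
      exact pprod_mem_spanGE _ (by simp [singlePart])
    have ht := ih (fun i => n i.succ) (fun i => hpos i.succ) (∑ i : Fin j, n i.succ) rfl
    have h2 := spanGE_mul h0 ht
    rw [hN] at h2
    exact spanGE_mono (by omega) h2

lemma prod_diff_mem : ∀ (j : ℕ) (n : Fin j → ℕ), (∀ i, 0 < n i) → ∀ (N : ℕ), (∑ i, n i) = N →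
    (∏ i, completeHomogeneous (n i)) - (∏ i, ((n i : ℚ))⁻¹ • powerSum (n i))
      ∈ spanGE N (j + 1) := by
  intro j
  induction j with
  | zero =>
    intro n _ N hN
    simp only [Finset.univ_eq_empty, Finset.prod_empty, sub_self]
    exact Submodule.zero_mem _
  | succ j ih =>
    intro n hpos N hN
    rw [Fin.prod_univ_succ, Fin.prod_univ_succ]
    rw [Fin.sum_univ_succ] at hN
    set nt : Fin j → ℕ := fun i => n i.succ with hnt
    set A := completeHomogeneous (n 0)
    set a := ((n 0 : ℚ))⁻¹ • powerSum (n 0)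
    set B := ∏ i, completeHomogeneous (nt i)
    set b := ∏ i, ((nt i : ℚ))⁻¹ • powerSum (nt i)
    have hIH : B - b ∈ spanGE (∑ i, nt i) (j + 1) :=
      ih nt (fun i => hpos i.succ) _ rfl
    have hb : b ∈ spanGE (∑ i, nt i) j := prodP_mem j nt (fun i => hpos i.succ) _ rfl
    have hB : B ∈ spanGE (∑ i, nt i) j := by
      have : B = b + (B - b) := by ring
      rw [this]
      exact Submodule.add_mem _ hb (spanGE_mono (by omega) hIH)
    have ha : a ∈ spanGE (n 0) 1 := by
      refine Submodule.smul_mem _ _ ?_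
      rw [← pprod_single (n 0) (hpos 0)]
      exact pprod_mem_spanGE _ (by simp [singlePart])
    have hAa : A - a ∈ spanGE (n 0) 2 := key_H (hpos 0)
    have heq : A * B - a * b = (A - a) * B + a * (B - b) := by ring
    rw [heq]
    have h1 := spanGE_mul hAa hB
    have h2 := spanGE_mul ha hIH
    rw [hN] at h1 h2
    refine Submodule.add_mem _ (spanGE_mono (by omega) h1) (spanGE_mono (by omega) h2)

/-- With `deg p_i = 1` (so `deg p_ν = ℓ(ν)`), the lowest-degree
part of the power sum expansion of `h_{n₁} ⋯ h_{n_j}` (all `n_i ≥ 1`) is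
`(p_{n₁}/n₁) ⋯ (p_{n_j}/n_j)`: the product equals this term plus a linear
combination of `p_ν` with `ℓ(ν) > j`. -/
theorem lowest_degree_part_of_completeHomogeneous_product
    (j : ℕ) (n : Fin j → ℕ) (hpos : ∀ i, 0 < n i) :
    ∃ c : Nat.Partition (∑ i, n i) → ℚ,
      ∏ i, completeHomogeneous (n i)
        = (∏ i, ((n i : ℚ))⁻¹ • powerSum (n i))
          + ∑ nu ∈ Finset.univ.filter
              (fun nu : Nat.Partition (∑ i, n i) => j < Multiset.card nu.parts),
              c nu • powerSumProd nu := by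
  have h := prod_diff_mem j n hpos (∑ i, n i) rfl
  rw [spanGE, Submodule.mem_span_range_iff_exists_fun] at h
  obtain ⟨c', hc'⟩ := h
  refine ⟨fun nu => if h : j < Multiset.card nu.parts then c' ⟨nu, h⟩ else 0, ?_⟩
  have hsum : ∑ nu ∈ Finset.univ.filter
        (fun nu : Nat.Partition (∑ i, n i) => j < Multiset.card nu.parts),
        (if h : j < Multiset.card nu.parts then c' ⟨nu, h⟩ else 0) • powerSumProd nu
      = ∑ nu : {nu : Nat.Partition (∑ i, n i) // j + 1 ≤ Multiset.card nu.parts},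
        c' nu • powerSumProd nu.1 := by
    rw [Finset.sum_subtype (p := fun nu : Nat.Partition (∑ i, n i) => j + 1 ≤ Multiset.card nu.parts)
      _ (fun x => by simp only [Finset.mem_filter, Finset.mem_univ, true_and]; exact Nat.lt_iff_add_one_le)]
    refine Finset.sum_congr rfl fun x _ => ?_
    rw [dif_pos (show j < Multiset.card (x : Nat.Partition (∑ i, n i)).parts from x.2)]
  rw [hsum, hc']
  ring
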